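/- arXiv:1707.09400 — 10 statements merged into one kernel-verified Lean document; each statement's English description precedes it below -/
import Mathlib

section
/- If G is a finite graph with minimum degree at least k, then G has a 2-partition (V1,V2) such that every vertex of V1 has at least one neighbour in V2 and every vertex of V2 has at least k neighbours in V1. -/
/-- If δ(G) ≥ k then G has a 2-partition (V1,V2) such that every
vertex of V1 has a neighbour in V2 and every vertex of V2 has at least k
neighbours in V1. -/
theorem stmt_2 {V : Type*} [Fintype V] (G : SimpleGraph V) (k : ℕ) (hk : 0 < k)
    (hδ : ∀ v : V, k ≤ {w : V | G.Adj v w}.ncard) :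
    ∃ A : Set V,
      (∀ v ∈ A, ∃ w, w ∉ A ∧ G.Adj v w) ∧
      (∀ v, v ∉ A → k ≤ {w : V | G.Adj v w ∧ w ∈ A}.ncard) := by
  classical
  set P : Set V → Prop := fun A => ∀ v, v ∉ A → k ≤ {w : V | G.Adj v w ∧ w ∈ A}.ncard with hP
  have hpuniv : P Set.univ := by
    intro v _
    have : {w : V | G.Adj v w ∧ w ∈ (Set.univ : Set V)} = {w : V | G.Adj v w} := by
      ext u; simp
    rw [this]; exact hδ v
  have hex : ∃ n, ∃ A : Set V, P A ∧ A.ncard = n := ⟨_, Set.univ, hpuniv, rfl⟩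
  obtain ⟨A, hPA, hcard⟩ := Nat.find_spec hex
  refine ⟨A, ?_, hPA⟩
  intro v hv
  by_contra h
  push_neg at h
  have hall : ∀ w, G.Adj v w → w ∈ A := by
    intro w hw
    by_contra hwA
    exact (h w hwA) hw
  have hP' : P (A \ {v}) := by
    intro w hw
    by_cases hwv : w = v
    · rw [hwv]
      have heq : {u : V | G.Adj v u ∧ u ∈ A \ {v}} = {u : V | G.Adj v u} := by
        ext u
        simp only [Set.mem_setOf_eq, Set.mem_diff, Set.mem_singleton_iff]
        constructor
        · rintro ⟨ha, _, _⟩; exact ha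
        · intro ha
          exact ⟨ha, hall u ha, fun huv => (huv ▸ ha).ne' rfl⟩
      rw [heq]; exact hδ v
    · have hwA : w ∉ A := by
        intro hwA'
        exact hw ⟨hwA', hwv⟩
      have heq : {u : V | G.Adj w u ∧ u ∈ A \ {v}} = {u : V | G.Adj w u ∧ u ∈ A} := by
        ext u
        simp only [Set.mem_setOf_eq, Set.mem_diff, Set.mem_singleton_iff]
        constructor
        · rintro ⟨ha, hu, _⟩; exact ⟨ha, hu⟩
        · rintro ⟨ha, hu⟩
          refine ⟨ha, hu, ?_⟩
          rintro rfl
          exact hwA (hall _ ha.symm)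
      rw [heq]; exact hPA w hwA
  have hlt : (A \ {v}).ncard < A.ncard :=
    Set.ncard_lt_ncard (Set.sdiff_singleton_ssubset.mpr hv) A.toFinite
  rw [hcard] at hlt
  exact Nat.find_min hex hlt ⟨A \ {v}, hP', rfl⟩
end

section
/- Let G be a finite graph with minimum degree exactly 1 and let S1 be the set of vertices of degree 1. Then G has a 2-partition (V1,V2) such that every vertex of V1 has at least one neighbour in V2 and every vertex of V2 has at least two neighbours in V1, if and only if S1 is a stable (independent) set and every vertex in N(S1) has either two neighbours in S1 or at least one neighbour in V(G) \ (S1 ∪ N(S1)). -/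
/-- Characterisation of graphs with minimum degree exactly 1
admitting a (δ≥1, δ≥2)-bipartite-partition. -/
theorem stmt_3 {V : Type*} [Fintype V] (G : SimpleGraph V)
    (hδ1 : ∀ v : V, 1 ≤ {w : V | G.Adj v w}.ncard)
    (hδeq : ∃ v : V, {w : V | G.Adj v w}.ncard = 1) :
    (∃ A : Set V,
        (∀ v ∈ A, ∃ w, w ∉ A ∧ G.Adj v w) ∧
        (∀ v, v ∉ A → 2 ≤ {w : V | G.Adj v w ∧ w ∈ A}.ncard)) ↔
      ((∀ u v : V, {w : V | G.Adj u w}.ncard = 1 →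
          {w : V | G.Adj v w}.ncard = 1 → ¬ G.Adj u v) ∧
       (∀ v : V, (∃ u : V, {w : V | G.Adj u w}.ncard = 1 ∧ G.Adj v u) →
          (2 ≤ {w : V | G.Adj v w ∧ {x : V | G.Adj w x}.ncard = 1}.ncard ∨
           ∃ w : V, G.Adj v w ∧ {x : V | G.Adj w x}.ncard ≠ 1 ∧
             ¬ ∃ u : V, {x : V | G.Adj u x}.ncard = 1 ∧ G.Adj w u))) := by
  classical
  constructor
  · rintro ⟨A, hA1, hA2⟩
    have hS1A : ∀ v : V, {w : V | G.Adj v w}.ncard = 1 → v ∈ A := by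
      intro v hv
      by_contra h
      have h2 := hA2 v h
      have hle : {w : V | G.Adj v w ∧ w ∈ A}.ncard ≤ {w : V | G.Adj v w}.ncard :=
        Set.ncard_le_ncard (fun w hw => hw.1) (Set.toFinite _)
      omega
    have huniq : ∀ u w w' : V, {x : V | G.Adj u x}.ncard = 1 →
        G.Adj u w → G.Adj u w' → w = w' := by
      intro u w w' hu hw hw'
      obtain ⟨a, haa⟩ := Set.ncard_eq_one.mp hu
      have h1 : w ∈ {x : V | G.Adj u x} := hw
      have h2 : w' ∈ {x : V | G.Adj u x} := hw'
      rw [haa] at h1 h2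
      simp only [Set.mem_singleton_iff] at h1 h2
      rw [h1, h2]
    have hNnA : ∀ u v : V, {x : V | G.Adj u x}.ncard = 1 → G.Adj u v → v ∉ A := by
      intro u v hu huv hvA
      obtain ⟨w, hwA, hw⟩ := hA1 u (hS1A u hu)
      have := huniq u v w hu huv hw
      subst this
      exact hwA hvA
    refine ⟨fun u v hu hv huv => hNnA u v hu huv (hS1A v hv), ?_⟩
    rintro v ⟨u, hu, hvu⟩
    by_contra hcon
    push_neg at hcon
    obtain ⟨hc1, hc2⟩ := hcon
    have hvA : v ∉ A := hNnA u v hu hvu.symm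
    have h2 := hA2 v hvA
    have hsub : {w : V | G.Adj v w ∧ w ∈ A} ⊆
        {w : V | G.Adj v w ∧ {x : V | G.Adj w x}.ncard = 1} := by
      rintro w ⟨hadj, hwA⟩
      refine ⟨hadj, ?_⟩
      by_contra hdw
      obtain ⟨u', hu', hwu'⟩ := hc2 w hadj hdw
      exact hNnA u' w hu' hwu'.symm hwA
    have hle := Set.ncard_le_ncard hsub (Set.toFinite _)
    omega
  · rintro ⟨ha, hb⟩
    set N : Set V := {v | ∃ u, {x : V | G.Adj u x}.ncard = 1 ∧ G.Adj v u} with hN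
    set R2 : Set V := {r | {x : V | G.Adj r x}.ncard ≠ 1 ∧ r ∉ N ∧
      ∀ w, G.Adj r w → w ∉ N} with hR2
    -- a maximal independent subset of R2
    obtain ⟨I, hImem, hImax⟩ :
        ∃ I ∈ {I : Set V | I ⊆ R2 ∧ ∀ a ∈ I, ∀ b ∈ I, ¬ G.Adj a b},
          ∀ J ∈ {I : Set V | I ⊆ R2 ∧ ∀ a ∈ I, ∀ b ∈ I, ¬ G.Adj a b},
            I ⊆ J → I = J := by
      obtain ⟨I, hI, hmax⟩ := Set.Finite.exists_maximalFor (id : Set V → Set V)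
        {I : Set V | I ⊆ R2 ∧ ∀ a ∈ I, ∀ b ∈ I, ¬ G.Adj a b} (Set.toFinite _)
        ⟨∅, by simp⟩
      exact ⟨I, hI, fun J hJ hIJ => Set.Subset.antisymm hIJ (hmax hJ hIJ)⟩
    obtain ⟨hIR2, hIind⟩ := hImem
    have hS1N : ∀ v : V, {x : V | G.Adj v x}.ncard = 1 → v ∉ N := by
      rintro v hv ⟨u, hu, hadj⟩
      exact ha v u hv hu hadj
    have hS1I : ∀ v : V, {x : V | G.Adj v x}.ncard = 1 → v ∉ I := by
      intro v hv hvI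
      exact (hIR2 hvI).1 hv
    refine ⟨{v | v ∉ N ∧ v ∉ I}, ?_, ?_⟩
    · rintro v ⟨hvN, hvI⟩
      by_cases hdv : {x : V | G.Adj v x}.ncard = 1
      · -- degree-1 vertex: its unique neighbour is in N
        obtain ⟨a, haa⟩ := Set.ncard_eq_one.mp hdv
        have hadj : G.Adj v a := by
          have : a ∈ {x : V | G.Adj v x} := by rw [haa]; rfl
          exact this
        exact ⟨a, fun hA => hA.1 ⟨v, hdv, hadj.symm⟩, hadj⟩
      · by_cases hn : ∃ w, G.Adj v w ∧ w ∈ N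
        · obtain ⟨w, hadj, hwN⟩ := hn
          exact ⟨w, fun hA => hA.1 hwN, hadj⟩
        · push_neg at hn
          have hvR2 : v ∈ R2 := ⟨hdv, hvN, hn⟩
          -- maximality of I gives a neighbour of v in I
          have hJ : ¬ (∀ a ∈ insert v I, ∀ b ∈ insert v I, ¬ G.Adj a b) := by
            intro hind
            have : I = insert v I := hImax _ ⟨Set.insert_subset hvR2 hIR2, hind⟩
              (Set.subset_insert _ _)
            exact hvI (this ▸ Set.mem_insert v I)
          push_neg at hJ
          obtain ⟨a, haJ, b, hbJ, hab⟩ := hJ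
          rcases haJ with rfl | haI
          · rcases hbJ with rfl | hbI
            · exact absurd hab (G.irrefl)
            · exact ⟨b, fun hA => hA.2 hbI, hab⟩
          · rcases hbJ with rfl | hbI
            · exact ⟨a, fun hA => hA.2 haI, hab.symm⟩
            · exact absurd hab (hIind a haI b hbI)
    · intro v hvA
      simp only [Set.mem_setOf_eq, not_and_or, not_not] at hvA
      rcases hvA with hvN | hvI
      · -- v ∈ N
        obtain ⟨u, hu, hvu⟩ := hvN
        rcases hb v ⟨u, hu, hvu⟩ with h2 | ⟨w, hvw, hdw, hwN⟩
        · have hsub : {w : V | G.Adj v w ∧ {x : V | G.Adj w x}.ncard = 1} ⊆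
              {w : V | G.Adj v w ∧ w ∈ {v | v ∉ N ∧ v ∉ I}} := by
            rintro w ⟨hadj, hw1⟩
            exact ⟨hadj, hS1N w hw1, hS1I w hw1⟩
          have hle := Set.ncard_le_ncard hsub (Set.toFinite _)
          omega
        · have hwN' : w ∉ N := hwN
          have hwI : w ∉ I := by
            intro hwI
            exact (hIR2 hwI).2.2 v hvw.symm ⟨u, hu, hvu⟩
          have huA : u ∈ {v | v ∉ N ∧ v ∉ I} := ⟨hS1N u hu, hS1I u hu⟩
          have hne : u ≠ w := fun h => hdw (h ▸ hu)
          have h1lt : 1 < {x : V | G.Adj v x ∧ x ∈ {v | v ∉ N ∧ v ∉ I}}.ncard := by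
            rw [Set.one_lt_ncard (Set.toFinite _)]
            exact ⟨u, ⟨hvu, huA⟩, w, ⟨hvw, ⟨hwN', hwI⟩⟩, hne⟩
          omega
      · -- v ∈ I : all its neighbours are in A
        have hvR2 := hIR2 hvI
        have heq : {w : V | G.Adj v w ∧ w ∈ {v | v ∉ N ∧ v ∉ I}} = {w : V | G.Adj v w} := by
          ext w
          simp only [Set.mem_setOf_eq, and_iff_left_iff_imp]
          intro hadj
          refine ⟨hvR2.2.2 w hadj, fun hwI => hIind v hvI w hwI hadj⟩
        rw [heq]
        have := hδ1 v
        have := hvR2.1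
        omega
end

section
/- A digraph D has a 2-partition (V1,V2) such that every vertex of V1 has an out-neighbour in V2 and every vertex of V2 has an in-neighbour in V1, if and only if D has a spanning nebula (a spanning set of vertex-disjoint non-trivial out-stars and in-stars). -/
/-- A (δ⁺≥1, δ⁻≥1)-bipartite-partition of a digraph `D`. -/
def HasBP {V : Type*} (D : V → V → Prop) : Prop :=
  ∃ A : Set V,
    (∀ v ∈ A, ∃ w, w ∉ A ∧ D v w) ∧
    (∀ v, v ∉ A → ∃ w ∈ A, D w v)

/-- A spanning nebula of a digraph `D`: a spanning vertex-disjoint collection of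
non-trivial out-stars and in-stars whose arcs are arcs of `D`. Each vertex is
assigned the root `r v` of its star; `out ρ` tells whether the star rooted at
`ρ` is an out-star. -/
def HasSpanningNebula {V : Type*} (D : V → V → Prop) : Prop :=
  ∃ (r : V → V) (out : V → Prop),
    (∀ v, r (r v) = r v) ∧
    (∀ v, r v ≠ v → ((out (r v) → D (r v) v) ∧ (¬ out (r v) → D v (r v)))) ∧
    (∀ v, r v = v → ∃ w, w ≠ v ∧ r w = v)

/-- A digraph has a (δ⁺≥1, δ⁻≥1)-bipartite-partition if and only
if it has a spanning nebula. -/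
theorem stmt_9 {V : Type*} [Fintype V] (D : V → V → Prop) :
    HasBP D ↔ HasSpanningNebula D := by
  classical
  constructor
  · rintro ⟨A, hA1, hA2⟩
    -- choose the "edge function" h
    have hex : ∀ v : V, ∃ w, (v ∈ A → w ∉ A ∧ D v w) ∧ (v ∉ A → w ∈ A ∧ D w v) := by
      intro v
      by_cases hv : v ∈ A
      · obtain ⟨w, hw1, hw2⟩ := hA1 v hv
        exact ⟨w, fun _ => ⟨hw1, hw2⟩, fun hc => absurd hv hc⟩
      · obtain ⟨w, hw1, hw2⟩ := hA2 v hv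
        exact ⟨w, fun hc => absurd hc hv, fun _ => ⟨hw1, hw2⟩⟩
    choose h hmemA hmemA' using hex
    have hne : ∀ v, h v ≠ v := by
      intro v hv
      by_cases h1 : v ∈ A
      · have := (hmemA v h1).1; rw [hv] at this; exact this h1
      · have := (hmemA' v h1).1; rw [hv] at this; exact h1 this
    -- "good" finsets : vertex-disjoint families of edges (v, h v)
    have hgood : ∃ S : Finset V,
        (∀ v ∈ S, ∀ u ∈ S, (h v = h u → v = u) ∧ h v ≠ u) ∧
        (∀ T : Finset V, (∀ v ∈ T, ∀ u ∈ T, (h v = h u → v = u) ∧ h v ≠ u) →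
          T.card ≤ S.card) := by
      obtain ⟨S, hS, hmax⟩ := Finset.exists_max_image
        ((Finset.univ : Finset (Finset V)).filter
          fun S => ∀ v ∈ S, ∀ u ∈ S, (h v = h u → v = u) ∧ h v ≠ u)
        Finset.card ⟨∅, by simp⟩
      refine ⟨S, (Finset.mem_filter.mp hS).2, fun T hT => ?_⟩
      exact hmax T (Finset.mem_filter.mpr ⟨Finset.mem_univ T, hT⟩)
    obtain ⟨S, hS, hmax⟩ := hgood
    have hinj : ∀ v ∈ S, ∀ u ∈ S, h v = h u → v = u := fun v hv u hu => (hS v hv u hu).1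
    have hdisj : ∀ v ∈ S, ∀ u ∈ S, h v ≠ u := fun v hv u hu => (hS v hv u hu).2
    -- matched vertices
    set Mt : V → Prop := fun x => x ∈ S ∨ ∃ v ∈ S, h v = x with hMt
    have hMax : ∀ w, ¬ Mt w → Mt (h w) := by
      intro w hw
      by_contra hw2
      have hwS : w ∉ S := fun hw' => hw (Or.inl hw')
      have hgood' : ∀ v ∈ insert w S, ∀ u ∈ insert w S, (h v = h u → v = u) ∧ h v ≠ u := by
        intro v hv u hu
        rcases Finset.mem_insert.mp hv with hv' | hv'
        · rcases Finset.mem_insert.mp hu with hu' | hu'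
          · rw [hv', hu']; exact ⟨fun _ => rfl, hne w⟩
          · rw [hv']
            constructor
            · intro he; exact absurd (Or.inr ⟨u, hu', he.symm⟩) hw2
            · intro he; exact hw2 (Or.inl (by rw [he]; exact hu'))
        · rcases Finset.mem_insert.mp hu with hu' | hu'
          · rw [hu']
            constructor
            · intro he; exact absurd (Or.inr ⟨v, hv', he⟩) hw2
            · intro he; exact hw (Or.inr ⟨v, hv', he⟩)
          · exact hS v hv' u hu'
      have hcard := hmax (insert w S) hgood'
      rw [Finset.card_insert_of_notMem hwS] at hcard
      omega
    -- "attachable" vertices: those with an unmatched h-preimage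
    set Ex : V → Prop := fun x => ∃ w, ¬ Mt w ∧ h w = x with hEx
    -- the root function
    set r : V → V := fun x =>
      if Mt x then
        (if Ex x then x
         else if x ∈ S then (if Ex (h x) then h x else x)
         else if hm : ∃ v ∈ S, h v = x then hm.choose else x)
      else h x with hrdef
    -- computation lemmas
    have F1 : ∀ x, ¬ Mt x → r x = h x := by
      intro x hx; simp only [hrdef]; rw [if_neg hx]
    have F2 : ∀ x, Mt x → Ex x → r x = x := by
      intro x hx he; simp only [hrdef]; rw [if_pos hx, if_pos he]
    have F3 : ∀ x, Mt x → ¬ Ex x → x ∈ S → Ex (h x) → r x = h x := by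
      intro x hx he hxS he2; simp only [hrdef]
      rw [if_pos hx, if_neg he, if_pos hxS, if_pos he2]
    have F4 : ∀ x, Mt x → ¬ Ex x → x ∈ S → ¬ Ex (h x) → r x = x := by
      intro x hx he hxS he2; simp only [hrdef]
      rw [if_pos hx, if_neg he, if_pos hxS, if_neg he2]
    have F5 : ∀ x, Mt x → ¬ Ex x → x ∉ S → r x ∈ S ∧ h (r x) = x := by
      intro x hx he hxS
      have hm : ∃ v ∈ S, h v = x := by
        rcases hx with hx | hx
        · exact absurd hx hxS
        · exact hx
      have : r x = hm.choose := by
        simp only [hrdef]; rw [if_pos hx, if_neg he, if_neg hxS, dif_pos hm]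
      rw [this]
      exact hm.choose_spec
    -- edge lemmas
    have edge1 : ∀ x, (h x ∈ A → D (h x) x) ∧ (h x ∉ A → D x (h x)) := by
      intro x
      by_cases hx : x ∈ A
      · obtain ⟨hm1, hm2⟩ := hmemA x hx
        exact ⟨fun hc => absurd hc hm1, fun _ => hm2⟩
      · obtain ⟨hm1, hm2⟩ := hmemA' x hx
        exact ⟨fun _ => hm2, fun hc => absurd hm1 hc⟩
    have edge2 : ∀ c, (c ∈ A → D c (h c)) ∧ (c ∉ A → D (h c) c) := by
      intro c
      by_cases hc : c ∈ A
      · exact ⟨fun _ => (hmemA c hc).2, fun hc' => absurd hc hc'⟩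
      · exact ⟨fun hc' => absurd hc' hc, fun _ => (hmemA' c hc).2⟩
    refine ⟨r, fun ρ => ρ ∈ A, ?_, ?_, ?_⟩
    · -- idempotence
      intro v
      by_cases hv : Mt v
      · by_cases he : Ex v
        · rw [F2 v hv he, F2 v hv he]
        · by_cases hvS : v ∈ S
          · by_cases he2 : Ex (h v)
            · rw [F3 v hv he hvS he2]
              exact F2 (h v) (Or.inr ⟨v, hvS, rfl⟩) he2
            · rw [F4 v hv he hvS he2, F4 v hv he hvS he2]
          · obtain ⟨hcS, hch⟩ := F5 v hv he hvS
            by_cases hec : Ex (r v)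
            · exact F2 (r v) (Or.inl hcS) hec
            · have : ¬ Ex (h (r v)) := by rw [hch]; exact he
              exact F4 (r v) (Or.inl hcS) hec hcS this
      · rw [F1 v hv]
        exact F2 (h v) (hMax v hv) ⟨v, hv, rfl⟩
    · -- edges
      intro v hrv
      by_cases hv : Mt v
      · by_cases he : Ex v
        · exact absurd (F2 v hv he) hrv
        · by_cases hvS : v ∈ S
          · by_cases he2 : Ex (h v)
            · rw [F3 v hv he hvS he2]
              exact edge1 v
            · exact absurd (F4 v hv he hvS he2) hrv
          · obtain ⟨hcS, hch⟩ := F5 v hv he hvS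
            constructor
            · intro hA
              have := (edge2 (r v)).1 hA
              rwa [hch] at this
            · intro hA
              have := (edge2 (r v)).2 hA
              rwa [hch] at this
      · rw [F1 v hv]
        exact edge1 v
    · -- nontriviality of roots
      intro v hrv
      by_cases hv : Mt v
      · by_cases he : Ex v
        · obtain ⟨w, hw1, hw2⟩ := he
          refine ⟨w, fun hc => hw1 (hc ▸ hv), ?_⟩
          rw [F1 w hw1, hw2]
        · by_cases hvS : v ∈ S
          · by_cases he2 : Ex (h v)
            · rw [F3 v hv he hvS he2] at hrv
              exact absurd hrv (hne v)
            · refine ⟨h v, hne v, ?_⟩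
              have hhM : Mt (h v) := Or.inr ⟨v, hvS, rfl⟩
              have hhS : h v ∉ S := fun hc => hdisj v hvS (h v) hc rfl
              obtain ⟨hcS, hch⟩ := F5 (h v) hhM he2 hhS
              exact hinj _ hcS v hvS hch
          · obtain ⟨hcS, hch⟩ := F5 v hv he hvS
            rw [hrv] at hch
            exact absurd hch (hne v)
      · rw [F1 v hv] at hrv
        exact absurd hrv (hne v)
  · rintro ⟨r, out, hidem, hedge, hroot⟩
    refine ⟨{v | (r v = v ∧ out v) ∨ (r v ≠ v ∧ ¬ out (r v))}, ?_, ?_⟩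
    · rintro v (⟨hrv, hout⟩ | ⟨hrv, hout⟩)
      · obtain ⟨w, hwv, hrw⟩ := hroot v hrv
        refine ⟨w, ?_, ?_⟩
        · rintro (⟨h1, _⟩ | ⟨_, h2⟩)
          · exact hwv (h1 ▸ hrw)
          · exact h2 (hrw ▸ hout)
        · have hne : r w ≠ w := by rw [hrw]; exact fun hc => hwv hc.symm
          have := (hedge w hne).1 (by rw [hrw]; exact hout)
          rwa [hrw] at this
      · refine ⟨r v, ?_, ?_⟩
        · rintro (⟨_, h2⟩ | ⟨h1, _⟩)
          · exact hout h2
          · exact h1 (hidem v)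
        · exact (hedge v hrv).2 hout
    · intro v hv
      by_cases hrv : r v = v
      · have hout : ¬ out v := fun hc => hv (Or.inl ⟨hrv, hc⟩)
        obtain ⟨w, hwv, hrw⟩ := hroot v hrv
        have hne : r w ≠ w := by rw [hrw]; exact fun hc => hwv hc.symm
        refine ⟨w, Or.inr ⟨hne, by rw [hrw]; exact hout⟩, ?_⟩
        have := (hedge w hne).2 (by rw [hrw]; exact hout)
        rwa [hrw] at this
      · have hout : out (r v) := by
          by_contra hc
          exact hv (Or.inr ⟨hrv, hc⟩)
        exact ⟨r v, Or.inl ⟨hidem v, hout⟩, (hedge v hrv).1 hout⟩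
end

section
/- For every integer r > 0, there exists an r-strong eulerian digraph D that admits no 2-partition (V1,V2) such that the spanning bipartite subdigraph induced by arcs between V1 and V2 is strongly connected. -/
/-- A digraph is strongly connected if every vertex is reachable from every
other vertex by a directed path. -/
def StronglyConnected {V : Type*} (D : V → V → Prop) : Prop :=
  ∀ u v : V, Relation.ReflTransGen D u v

namespace Stmt11

/-- The digraph: vertex 0 is the hub `z`; `X₀ = [1,k]`, `X₁ = [k+1,2k]`.
Arcs: `z→X₀`, all `X₀→X₁`, `X₁→X₀` minus the matching `x+k → x`, and `X₁→z`. -/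
def Arc (k : ℕ) (u v : Fin (2*k+1)) : Prop :=
  (u.val = 0 ∧ 1 ≤ v.val ∧ v.val ≤ k) ∨
  (1 ≤ u.val ∧ u.val ≤ k ∧ k+1 ≤ v.val) ∨
  (k+1 ≤ u.val ∧ 1 ≤ v.val ∧ v.val ≤ k ∧ u.val ≠ v.val + k) ∨
  (k+1 ≤ u.val ∧ v.val = 0)

lemma arc_zx (k : ℕ) (u v : Fin (2*k+1)) (h0 : u.val = 0) (h1 : 1 ≤ v.val)
    (h2 : v.val ≤ k) : Arc k u v := Or.inl ⟨h0, h1, h2⟩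

lemma arc_xy (k : ℕ) (u v : Fin (2*k+1)) (h1 : 1 ≤ u.val) (h2 : u.val ≤ k)
    (h3 : k+1 ≤ v.val) : Arc k u v := Or.inr (Or.inl ⟨h1, h2, h3⟩)

lemma arc_yx (k : ℕ) (u v : Fin (2*k+1)) (h1 : k+1 ≤ u.val) (h2 : 1 ≤ v.val)
    (h3 : v.val ≤ k) (h4 : u.val ≠ v.val + k) : Arc k u v :=
  Or.inr (Or.inr (Or.inl ⟨h1, h2, h3, h4⟩))

lemma arc_y0 (k : ℕ) (u v : Fin (2*k+1)) (h1 : k+1 ≤ u.val) (h2 : v.val = 0) :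
    Arc k u v := Or.inr (Or.inr (Or.inr ⟨h1, h2⟩))

/-- involution swapping the two halves, used for the degree of the hub -/
def f0 (k : ℕ) (w : Fin (2*k+1)) : Fin (2*k+1) :=
  if w.val = 0 then w
  else if h : w.val ≤ k then ⟨w.val + k, by omega⟩
  else ⟨w.val - k, by have := w.isLt; omega⟩

lemma f0_val (k : ℕ) (w : Fin (2*k+1)) :
    (f0 k w).val = if w.val = 0 then w.val else if w.val ≤ k then w.val + k
      else w.val - k := by
  unfold f0
  split_ifs <;> rfl

lemma f0_inv (k : ℕ) : Function.Involutive (f0 k) := by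
  intro w
  have hw := w.isLt
  apply Fin.ext
  rw [f0_val, f0_val]
  split_ifs <;> omega

lemma balance (k : ℕ) (v : Fin (2*k+1)) :
    Nat.card {w : Fin (2*k+1) // Arc k v w} = Nat.card {w : Fin (2*k+1) // Arc k w v} := by
  have hv := v.isLt
  rcases Nat.lt_or_ge v.val (k+1) with hvk | hvk
  · rcases Nat.eq_zero_or_pos v.val with hv0 | hv0
    · -- hub: swap the two halves
      refine Nat.card_congr (Equiv.subtypeEquiv
        (Function.Involutive.toPerm (f0 k) (f0_inv k)) fun w => ?_)
      have hw := w.isLt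
      have hfw : ((Function.Involutive.toPerm (f0 k) (f0_inv k)) w).val = (f0 k w).val := rfl
      simp only [Arc, hfw, f0_val]
      split_ifs <;>
        (try simp only [true_and, and_true, false_and, and_false, true_or,
          or_true, false_or, or_false]) <;> omega
    · -- v ∈ X₀ : swap 0 and v+k
      refine Nat.card_congr (Equiv.subtypeEquiv
        (Equiv.swap (⟨0, by omega⟩ : Fin (2*k+1)) ⟨v.val + k, by omega⟩) fun w => ?_)
      have hw := w.isLt
      rw [Equiv.swap_apply_def]
      split_ifs with h1 h2
      · have hx : w.val = 0 := congrArg Fin.val h1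
        clear h1
        simp only [Arc, Fin.val_mk, true_and, and_true, false_and, and_false, true_or,
          or_true, false_or, or_false]
        omega
      · have hx : w.val = v.val + k := congrArg Fin.val h2
        clear h1 h2
        simp only [Arc, Fin.val_mk, true_and, and_true, false_and, and_false, true_or,
          or_true, false_or, or_false]
        omega
      · have e1 : w.val ≠ 0 := fun h => h1 (Fin.ext h)
        have e2 : w.val ≠ v.val + k := fun h => h2 (Fin.ext h)
        clear h1 h2
        simp only [Arc, Fin.val_mk, true_and, and_true, false_and, and_false, true_or,
          or_true, false_or, or_false]
        omega
  · -- v ∈ X₁ : swap 0 and v−k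
    refine Nat.card_congr (Equiv.subtypeEquiv
      (Equiv.swap (⟨0, by omega⟩ : Fin (2*k+1)) ⟨v.val - k, by omega⟩) fun w => ?_)
    have hw := w.isLt
    rw [Equiv.swap_apply_def]
    split_ifs with h1 h2
    · have hx : w.val = 0 := congrArg Fin.val h1
      clear h1
      simp only [Arc, Fin.val_mk, true_and, and_true, false_and, and_false, true_or,
        or_true, false_or, or_false]
      omega
    · have hx : w.val = v.val - k := congrArg Fin.val h2
      clear h1 h2
      simp only [Arc, Fin.val_mk, true_and, and_true, false_and, and_false, true_or,
        or_true, false_or, or_false]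
      omega
    · have e1 : w.val ≠ 0 := fun h => h1 (Fin.ext h)
      have e2 : w.val ≠ v.val - k := fun h => h2 (Fin.ext h)
      clear h1 h2
      simp only [Arc, Fin.val_mk, true_and, and_true, false_and, and_false, true_or,
        or_true, false_or, or_false]
      omega

/-- r-strong connectivity after deleting a small set. -/
lemma strong_del (k : ℕ) (S : Set (Fin (2*k+1))) (hS : S.ncard + 2 ≤ k) :
    StronglyConnected (fun a b : {v : Fin (2*k+1) // v ∉ S} => Arc k a b) := by
  classical
  have hfin : S.Finite := Set.toFinite S
  set T := hfin.toFinset with hTdef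
  have hT : T.card + 2 ≤ k := by
    rwa [← Set.ncard_eq_toFinset_card S hfin]
  -- the two halves as finsets
  have hk : 0 < k := by omega
  let e0 : Fin k ↪ Fin (2*k+1) :=
    ⟨fun i => ⟨i.val + 1, by have := i.isLt; omega⟩, by
      intro a b h
      have := congrArg Fin.val h
      simp only [Fin.val_mk] at this
      exact Fin.ext (by omega)⟩
  let e1 : Fin k ↪ Fin (2*k+1) :=
    ⟨fun i => ⟨i.val + (k+1), by have := i.isLt; omega⟩, by
      intro a b h
      have := congrArg Fin.val h
      simp only [Fin.val_mk] at this
      exact Fin.ext (by omega)⟩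
  let F0 : Finset (Fin (2*k+1)) := Finset.univ.map e0
  let F1 : Finset (Fin (2*k+1)) := Finset.univ.map e1
  have hF0card : F0.card = k := by simp [F0]
  have hF1card : F1.card = k := by simp [F1]
  have hF0mem : ∀ w ∈ F0, 1 ≤ w.val ∧ w.val ≤ k := by
    intro w hw
    rcases Finset.mem_map.mp hw with ⟨i, _, rfl⟩
    have := i.isLt
    simp only [e0, Function.Embedding.coeFn_mk, Fin.val_mk]
    change 1 ≤ i.val + 1 ∧ i.val + 1 ≤ k
    omega
  have hF1mem : ∀ w ∈ F1, k+1 ≤ w.val := by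
    intro w hw
    rcases Finset.mem_map.mp hw with ⟨i, _, rfl⟩
    simp only [e1, Function.Embedding.coeFn_mk, Fin.val_mk]
    change k+1 ≤ i.val + (k+1)
    omega
  -- two survivors in each half
  have hsd0 : 1 < (F0 \ T).card := by
    have := Finset.le_card_sdiff T F0
    omega
  have hsd1 : 1 < (F1 \ T).card := by
    have := Finset.le_card_sdiff T F1
    omega
  rcases Finset.one_lt_card.mp hsd0 with ⟨a, ha, b, hb, hab⟩
  rcases Finset.one_lt_card.mp hsd1 with ⟨c, hc, d, hd, hcd⟩
  rcases Finset.mem_sdiff.mp ha with ⟨haF, haT⟩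
  rcases Finset.mem_sdiff.mp hb with ⟨hbF, hbT⟩
  rcases Finset.mem_sdiff.mp hc with ⟨hcF, hcT⟩
  rcases Finset.mem_sdiff.mp hd with ⟨hdF, hdT⟩
  have haS : a ∉ S := fun h => haT (hfin.mem_toFinset.mpr h)
  have hbS : b ∉ S := fun h => hbT (hfin.mem_toFinset.mpr h)
  have hcS : c ∉ S := fun h => hcT (hfin.mem_toFinset.mpr h)
  have hdS : d ∉ S := fun h => hdT (hfin.mem_toFinset.mpr h)
  obtain ⟨ha1, ha2⟩ := hF0mem a haF
  obtain ⟨hb1, hb2⟩ := hF0mem b hbF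
  have hc1 := hF1mem c hcF
  have hd1 := hF1mem d hdF
  have habv : a.val ≠ b.val := fun h => hab (Fin.ext h)
  have hcdv : c.val ≠ d.val := fun h => hcd (Fin.ext h)
  set R : {v : Fin (2*k+1) // v ∉ S} → {v : Fin (2*k+1) // v ∉ S} → Prop :=
    fun a b => Arc k a b with hR
  let a' : {v : Fin (2*k+1) // v ∉ S} := ⟨a, haS⟩
  let b' : {v : Fin (2*k+1) // v ∉ S} := ⟨b, hbS⟩
  let c' : {v : Fin (2*k+1) // v ∉ S} := ⟨c, hcS⟩
  let d' : {v : Fin (2*k+1) // v ∉ S} := ⟨d, hdS⟩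
  -- every vertex reaches c'
  have reach : ∀ u : {v : Fin (2*k+1) // v ∉ S}, Relation.ReflTransGen R u c' := by
    intro u
    have hu := (u : Fin (2*k+1)).isLt
    rcases Nat.lt_or_ge (u : Fin (2*k+1)).val (k+1) with huk | huk
    · rcases Nat.eq_zero_or_pos (u : Fin (2*k+1)).val with hu0 | hu0
      · exact Relation.ReflTransGen.head
          (show R u a' from arc_zx k (↑u) a hu0 ha1 ha2)
          (Relation.ReflTransGen.single (show R a' c' from arc_xy k a c ha1 ha2 hc1))
      · exact Relation.ReflTransGen.single
          (show R u c' from arc_xy k (↑u) c (by omega) (by omega) hc1)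
    · by_cases hm : (u : Fin (2*k+1)).val = a.val + k
      · exact Relation.ReflTransGen.head
          (show R u b' from arc_yx k (↑u) b huk hb1 hb2 (by omega))
          (Relation.ReflTransGen.single (show R b' c' from arc_xy k b c hb1 hb2 hc1))
      · exact Relation.ReflTransGen.head
          (show R u a' from arc_yx k (↑u) a huk ha1 ha2 hm)
          (Relation.ReflTransGen.single (show R a' c' from arc_xy k a c ha1 ha2 hc1))
  -- c' reaches every vertex
  have spread : ∀ v : {v : Fin (2*k+1) // v ∉ S}, Relation.ReflTransGen R c' v := by
    intro v
    have hv := (v : Fin (2*k+1)).isLt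
    rcases Nat.lt_or_ge (v : Fin (2*k+1)).val (k+1) with hvk | hvk
    · rcases Nat.eq_zero_or_pos (v : Fin (2*k+1)).val with hv0 | hv0
      · exact Relation.ReflTransGen.single
          (show R c' v from arc_y0 k c (↑v) hc1 hv0)
      · by_cases hm : c.val = (v : Fin (2*k+1)).val + k
        · by_cases hav : a.val = (v : Fin (2*k+1)).val
          · exact Relation.ReflTransGen.head
              (show R c' b' from arc_yx k c b hc1 hb1 hb2 (by omega))
              (Relation.ReflTransGen.head
                (show R b' d' from arc_xy k b d hb1 hb2 hd1)
                (Relation.ReflTransGen.single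
                  (show R d' v from arc_yx k d (↑v) hd1 hv0 (by omega) (by omega))))
          · exact Relation.ReflTransGen.head
              (show R c' a' from arc_yx k c a hc1 ha1 ha2 (by omega))
              (Relation.ReflTransGen.head
                (show R a' d' from arc_xy k a d ha1 ha2 hd1)
                (Relation.ReflTransGen.single
                  (show R d' v from arc_yx k d (↑v) hd1 hv0 (by omega) (by omega))))
        · exact Relation.ReflTransGen.single
            (show R c' v from arc_yx k c (↑v) hc1 hv0 (by omega) hm)
    · by_cases hm : c.val = a.val + k
      · exact Relation.ReflTransGen.head
          (show R c' b' from arc_yx k c b hc1 hb1 hb2 (by omega))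
          (Relation.ReflTransGen.single
            (show R b' v from arc_xy k b (↑v) hb1 hb2 hvk))
      · exact Relation.ReflTransGen.head
          (show R c' a' from arc_yx k c a hc1 ha1 ha2 hm)
          (Relation.ReflTransGen.single
            (show R a' v from arc_xy k a (↑v) ha1 ha2 hvk))
  intro u v
  exact Relation.ReflTransGen.trans (reach u) (spread v)

lemma underlying (k : ℕ) :
    ∀ u v : Fin (2*k+1), Relation.ReflTransGen
      (fun a b => Arc k a b ∨ Arc k b a) u v := by
  intro u v
  have hto : ∀ w : Fin (2*k+1), Relation.ReflTransGen
      (fun a b => Arc k a b ∨ Arc k b a) w ⟨0, by omega⟩ := by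
    intro w
    have hw := w.isLt
    rcases Nat.eq_zero_or_pos w.val with h0 | h0
    · have hwz : w = ⟨0, by omega⟩ := Fin.ext h0
      rw [hwz]
    · rcases Nat.lt_or_ge w.val (k+1) with hk1 | hk1
      · exact Relation.ReflTransGen.single
          (Or.inr (arc_zx k ⟨0, by omega⟩ w rfl h0 (by omega)))
      · exact Relation.ReflTransGen.single
          (Or.inl (arc_y0 k w ⟨0, by omega⟩ hk1 rfl))
  have hfrom : ∀ w : Fin (2*k+1), Relation.ReflTransGen
      (fun a b => Arc k a b ∨ Arc k b a) ⟨0, by omega⟩ w := by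
    intro w
    have hw := w.isLt
    rcases Nat.eq_zero_or_pos w.val with h0 | h0
    · have hwz : w = ⟨0, by omega⟩ := Fin.ext h0
      rw [hwz]
    · rcases Nat.lt_or_ge w.val (k+1) with hk1 | hk1
      · exact Relation.ReflTransGen.single
          (Or.inl (arc_zx k ⟨0, by omega⟩ w rfl h0 (by omega)))
      · exact Relation.ReflTransGen.single
          (Or.inr (arc_y0 k w ⟨0, by omega⟩ hk1 rfl))
  exact Relation.ReflTransGen.trans (hto u) (hfrom v)

lemma no2part (k : ℕ) (hk : 0 < k) :
    ¬ ∃ A : Set (Fin (2*k+1)),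
      StronglyConnected (fun u v : Fin (2*k+1) => Arc k u v ∧ ¬ (u ∈ A ↔ v ∈ A)) := by
  classical
  rintro ⟨A, hA⟩
  set B : Fin (2*k+1) → Fin (2*k+1) → Prop :=
    fun u v => Arc k u v ∧ ¬ (u ∈ A ↔ v ∈ A) with hB
  set χ : Fin (2*k+1) → ZMod 2 := (fun v => if v ∈ A then 1 else 0) with hχ
  set g : Fin (2*k+1) → ZMod 2 :=
    (fun v => χ v + (if 1 ≤ v.val ∧ v.val ≤ k then 1 else 0)) with hg
  have htwo : ∀ x : ZMod 2, x + 1 + 1 = x := by decide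
  have hflip : ∀ u v : Fin (2*k+1), ¬ (u ∈ A ↔ v ∈ A) → χ v = χ u + 1 := by
    intro u v h
    by_cases hu : u ∈ A <;> by_cases hv : v ∈ A
    · exact absurd (Iff.intro (fun _ => hv) (fun _ => hu)) h
    · simp only [hχ, if_pos hu, if_neg hv]
      decide
    · simp only [hχ, if_neg hu, if_pos hv]
      decide
    · exact absurd (Iff.intro (fun h' => absurd h' hu) (fun h' => absurd h' hv)) h
  have hL1 : ∀ u v : Fin (2*k+1), B u v → v.val ≠ 0 → g v = g u := by
    intro u v hBuv hv0
    obtain ⟨hD, hAB⟩ := hBuv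
    have huv := hflip u v hAB
    have hu := u.isLt
    have hvlt := v.isLt
    rcases hD with ⟨h1, h2, h3⟩ | ⟨h1, h2, h3⟩ | ⟨h1, h2, h3, h4⟩ | ⟨h1, h2⟩
    · simp only [hg]
      rw [if_pos ⟨h2, h3⟩, if_neg (show ¬(1 ≤ u.val ∧ u.val ≤ k) by omega),
        huv, htwo, add_zero]
    · simp only [hg]
      rw [if_neg (show ¬(1 ≤ v.val ∧ v.val ≤ k) by omega), if_pos ⟨h1, h2⟩,
        huv, add_zero]
    · simp only [hg]
      rw [if_pos ⟨h2, h3⟩, if_neg (show ¬(1 ≤ u.val ∧ u.val ≤ k) by omega),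
        huv, htwo, add_zero]
    · exact absurd h2 hv0
  have hzlt : (0:ℕ) < 2*k+1 := by omega
  set z : Fin (2*k+1) := ⟨0, hzlt⟩ with hz
  have hzv : z.val = 0 := rfl
  have hL2 : ∀ u : Fin (2*k+1), B u z → g z = g u + 1 := by
    intro u hBuz
    obtain ⟨hD, hAB⟩ := hBuz
    have huv := hflip u z hAB
    rcases hD with ⟨h1, h2, h3⟩ | ⟨h1, h2, h3⟩ | ⟨h1, h2, h3, h4⟩ | ⟨h1, h2⟩
    · exact absurd h2 (by omega)
    · exact absurd h3 (by omega)
    · exact absurd h2 (by omega)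
    · simp only [hg]
      rw [if_neg (show ¬(1 ≤ z.val ∧ z.val ≤ k) by omega),
        if_neg (show ¬(1 ≤ u.val ∧ u.val ≤ k) by omega),
        huv, add_zero, add_zero]
  have h1z := hA ⟨1, by omega⟩ z
  rcases Relation.ReflTransGen.cases_tail h1z with heq | ⟨u, _, huz⟩
  · have : z.val = 1 := congrArg Fin.val heq
    omega
  · have hstrip : ∀ w, Relation.ReflTransGen B z w → g w = g z := by
      intro w hw
      induction hw with
      | refl => rfl
      | @tail p q hp hstep ih =>
        by_cases h0 : q.val = 0
        · have hq : q = z := Fin.ext (by rw [h0, hzv])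
          rw [hq]
        · rw [hL1 p q hstep h0, ih]
    have hgu : g u = g z := hstrip u (hA z u)
    have hcontra := hL2 u huz
    rw [hgu] at hcontra
    have h10 : (1 : ZMod 2) = 0 := left_eq_add.mp hcontra
    exact one_ne_zero h10

end Stmt11

/-- For every r > 0 there is an r-strong eulerian digraph with no
strong 2-partition. -/
theorem stmt_11 (r : ℕ) (hr : 0 < r) :
    ∃ (n : ℕ) (D : Fin n → Fin n → Prop),
      -- D is r-strong
      (r < n ∧ ∀ S : Set (Fin n), S.ncard < r →
        StronglyConnected (fun a b : {v : Fin n // v ∉ S} => D a b)) ∧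
      -- D is eulerian: balanced degrees and connected underlying graph
      (∀ v : Fin n, Nat.card {w : Fin n // D v w} = Nat.card {w : Fin n // D w v}) ∧
      (∀ u v : Fin n, Relation.ReflTransGen (fun a b => D a b ∨ D b a) u v) ∧
      -- no strong 2-partition
      ¬ ∃ A : Set (Fin n),
          StronglyConnected (fun u v : Fin n => D u v ∧ ¬ (u ∈ A ↔ v ∈ A)) := by
  refine ⟨2*(r+1)+1, Stmt11.Arc (r+1), ⟨by omega, ?_⟩, ?_, ?_, ?_⟩
  · intro S hS
    exact Stmt11.strong_del (r+1) S (by omega)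
  · exact Stmt11.balance (r+1)
  · exact Stmt11.underlying (r+1)
  · exact Stmt11.no2part (r+1) (by omega)
end

section
/- Let H be a digraph on vertex set X ∪ Y ∪ Z where X, Y, Z are disjoint sets of size r ≥ 1, containing all arcs from X to Y, from Y to Z, and from Z to X (the gadget G_r(X), possibly with extra arcs within X). Then in any 2-partition (V1,V2) of a digraph D containing this gadget such that B_D(V1,V2) is strong, the set X is not contained in a single part V_i. -/
lemma stmt_12_aux {V : Type*} (D : V → V → Prop)
    (X Y Z : Set V)
    (hXY : Disjoint X Y) (hXZ : Disjoint X Z)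
    (hX : X.Nonempty) (hY : Y.Nonempty) (hZ : Z.Nonempty)
    (hYin : ∀ u v : V, D u v → v ∈ Y → u ∈ X)
    (hZin : ∀ u v : V, D u v → v ∈ Z → u ∈ Y)
    (hZout : ∀ u v : V, D u v → u ∈ Z → v ∈ X)
    (A : Set V)
    (hstrong : StronglyConnected (fun u v : V => D u v ∧ ¬ (u ∈ A ↔ v ∈ A)))
    (hXA : X ⊆ A) : False := by
  obtain ⟨x, hx⟩ := hX
  by_cases hcase : ∃ y ∈ Y, y ∈ A
  · obtain ⟨y, hyY, hyA⟩ := hcase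
    have hxy : x ≠ y := fun h => hXY.ne_of_mem hx hyY h
    rcases (hstrong x y).cases_tail with h | ⟨c, _, hc, hcross⟩
    · exact hxy h.symm
    · exact hcross ⟨fun _ => hyA, fun _ => hXA (hYin c y hc hyY)⟩
  · push_neg at hcase
    by_cases hcase2 : ∃ z ∈ Z, z ∉ A
    · obtain ⟨z, hzZ, hzA⟩ := hcase2
      have hxz : x ≠ z := fun h => hXZ.ne_of_mem hx hzZ h
      rcases (hstrong x z).cases_tail with h | ⟨c, _, hc, hcross⟩
      · exact hxz h.symm
      · exact hcross ⟨fun h => (hcase c (hZin c z hc hzZ) h).elim,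
          fun h => (hzA h).elim⟩
    · push_neg at hcase2
      obtain ⟨z, hzZ⟩ := hZ
      have hzx : z ≠ x := fun h => (hXZ.ne_of_mem hx hzZ h.symm).elim
      rcases (hstrong z x).cases_head with h | ⟨c, ⟨hc, hcross⟩, _⟩
      · exact hzx h
      · exact hcross ⟨fun _ => hXA (hZout z c hc hzZ), fun _ => hcase2 z hzZ⟩

/-- If a digraph `D` contains the gadget G_r(X) (all arcs X→Y,
Y→Z, Z→X, and all arcs incident with Y ∪ Z lie inside the gadget), then in any
2-partition (A, Aᶜ) whose induced bipartite digraph is strong, X is not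
contained in a single part. -/
theorem stmt_12 {V : Type*} [Fintype V] (D : V → V → Prop)
    (X Y Z : Set V) (r : ℕ) (hr : 0 < r)
    (hXY : Disjoint X Y) (hXZ : Disjoint X Z) (hYZ : Disjoint Y Z)
    (hXc : X.ncard = r) (hYc : Y.ncard = r) (hZc : Z.ncard = r)
    (hxy : ∀ x ∈ X, ∀ y ∈ Y, D x y)
    (hyz : ∀ y ∈ Y, ∀ z ∈ Z, D y z)
    (hzx : ∀ z ∈ Z, ∀ x ∈ X, D z x)
    (hYin : ∀ u v : V, D u v → v ∈ Y → u ∈ X)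
    (hYout : ∀ u v : V, D u v → u ∈ Y → v ∈ Z)
    (hZin : ∀ u v : V, D u v → v ∈ Z → u ∈ Y)
    (hZout : ∀ u v : V, D u v → u ∈ Z → v ∈ X)
    (A : Set V)
    (hstrong : StronglyConnected (fun u v : V => D u v ∧ ¬ (u ∈ A ↔ v ∈ A))) :
    ¬ (X ⊆ A) ∧ ¬ (X ⊆ Aᶜ) := by
  have hX : X.Nonempty := Set.nonempty_of_ncard_ne_zero (by omega)
  have hY : Y.Nonempty := Set.nonempty_of_ncard_ne_zero (by omega)
  have hZ : Z.Nonempty := Set.nonempty_of_ncard_ne_zero (by omega)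
  have hstrong' : StronglyConnected
      (fun u v : V => D u v ∧ ¬ (u ∈ Aᶜ ↔ v ∈ Aᶜ)) := by
    have : (fun u v : V => D u v ∧ ¬ (u ∈ Aᶜ ↔ v ∈ Aᶜ)) =
        (fun u v : V => D u v ∧ ¬ (u ∈ A ↔ v ∈ A)) := by
      funext u v
      simp [Set.mem_compl_iff, not_iff_not]
    rw [this]; exact hstrong
  exact ⟨fun h => stmt_12_aux D X Y Z hXY hXZ hX hY hZ hYin hZin hZout A hstrong h,
    fun h => stmt_12_aux D X Y Z hXY hXZ hX hY hZ hYin hZin hZout Aᶜ hstrong' h⟩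
end

section
/- The gadget digraph G_r(X) on vertex set X ∪ Y ∪ Z, where X, Y, Z are disjoint sets of size r and the arcs are all pairs X→Y, Y→Z and Z→X, is r-strong: deleting any set of fewer than r vertices leaves a strongly connected digraph. -/
/-- The gadget G_r(X) on vertex set (Fin 3) × (Fin r): part 0 is X, part 1 is Y,
part 2 is Z, with all arcs X→Y, Y→Z, Z→X. -/
def Gadget (r : ℕ) : Fin 3 × Fin r → Fin 3 × Fin r → Prop :=
  fun u v => v.1 = u.1 + 1

/-- The gadget G_r(X) is r-strong. -/
theorem stmt_13 (r : ℕ) (hr : 0 < r) :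
    r + 1 ≤ Fintype.card (Fin 3 × Fin r) ∧
    ∀ S : Set (Fin 3 × Fin r), S.ncard < r →
      StronglyConnected
        (fun a b : {v : Fin 3 × Fin r // v ∉ S} => Gadget r a b) := by
  constructor
  · simp [Fintype.card_prod]
    omega
  · intro S hS u v
    -- each part has a vertex outside S
    have survivor : ∀ c : Fin 3, ∃ k : Fin r, (c, k) ∉ S := by
      intro c
      by_contra h
      push_neg at h
      have himg : (fun k : Fin r => (c, k)) '' Set.univ ⊆ S := by
        rintro ⟨c', k⟩ ⟨k', -, hk⟩
        cases hk
        exact h k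
      have hinj : Function.Injective (fun k : Fin r => (c, k)) := by
        intro a b hab
        simpa using hab
      have hcard : ((fun k : Fin r => (c, k)) '' Set.univ).ncard = r := by
        rw [Set.ncard_image_of_injective _ hinj, Set.ncard_univ]
        simp
      have := Set.ncard_le_ncard himg (Set.toFinite S)
      omega
    set rel := (fun a b : {v : Fin 3 × Fin r // v ∉ S} => Gadget r a b) with hrel
    have step : ∀ a b : {v : Fin 3 × Fin r // v ∉ S}, b.1.1 = a.1.1 + 1 →
        Relation.ReflTransGen rel a b := by
      intro a b h
      exact Relation.ReflTransGen.single h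
    have tri : ∀ a b : Fin 3, b = a ∨ b = a + 1 ∨ b = a + 1 + 1 := by decide
    rcases tri u.1.1 v.1.1 with h | h | h
    · -- two intermediate vertices
      obtain ⟨k1, hk1⟩ := survivor (u.1.1 + 1)
      obtain ⟨k2, hk2⟩ := survivor (u.1.1 + 1 + 1)
      refine (step u ⟨(u.1.1 + 1, k1), hk1⟩ rfl).trans
        ((step _ ⟨(u.1.1 + 1 + 1, k2), hk2⟩ rfl).trans (step _ v ?_))
      show v.1.1 = u.1.1 + 1 + 1 + 1
      rw [h]; exact (show ∀ a : Fin 3, a = a + 1 + 1 + 1 by decide) _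
    · exact step u v h
    · obtain ⟨k1, hk1⟩ := survivor (u.1.1 + 1)
      exact (step u ⟨(u.1.1 + 1, k1), hk1⟩ rfl).trans (step _ v h)
end

section
/- Every graph G has a 2-partition (V1,V2) such that the edge-connectivity of the spanning bipartite subgraph B_G(V1,V2) is at least ⌊λ(G)/2⌋, where λ(G) is the edge-connectivity of G. -/
/-- The edge-connectivity of a graph: the least number of edges whose removal
disconnects the graph (0 if no edge set disconnects it). -/
noncomputable def edgeConn {V : Type*} [Fintype V] (G : SimpleGraph V) : ℕ :=
  sInf {n : ℕ | ∃ F : Set (Sym2 V), F.ncard = n ∧ ¬ (G.deleteEdges F).Connected}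

section Aux

variable {V : Type*} [Fintype V]

/-- The set of `Sym2` elements "crossing" a set `S`. -/
def crossSet (S : Set V) : Set (Sym2 V) :=
  {e | Sym2.lift ⟨fun a b => Xor' (a ∈ S) (b ∈ S), fun a b => by dsimp only; exact propext ⟨fun h => h.symm, fun h => h.symm⟩⟩ e}

lemma mem_crossSet {S : Set V} {a b : V} :
    s(a, b) ∈ crossSet S ↔ Xor' (a ∈ S) (b ∈ S) := Iff.rfl

lemma walk_stay {G' : SimpleGraph V} {S : Set V}
    (h : ∀ a b, G'.Adj a b → a ∈ S → b ∈ S) {u v : V} (p : G'.Walk u v)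
    (hu : u ∈ S) : v ∈ S := by
  induction p with
  | nil => exact hu
  | cons hadj _ ih => exact ih (h _ _ hadj hu)

/-- Deleting all edges across a nontrivial cut disconnects the graph. -/
lemma cut_disconnects (G : SimpleGraph V) {S : Set V} {u v : V}
    (hu : u ∈ S) (hv : v ∉ S) :
    ¬ (G.deleteEdges (G.edgeSet ∩ crossSet S)).Connected := by
  intro h
  obtain ⟨p⟩ := h.preconnected u v
  refine hv (walk_stay (G' := G.deleteEdges (G.edgeSet ∩ crossSet S)) ?_ p hu)
  intro a b hab ha
  rw [SimpleGraph.deleteEdges_adj] at hab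
  by_contra hb
  exact hab.2 ⟨G.mem_edgeSet.mpr hab.1, mem_crossSet.mpr (Or.inl ⟨ha, hb⟩)⟩

/-- Key counting consequence of maximality of the cut `A`. -/
lemma max_cut_count (G : SimpleGraph V) {A : Set V}
    (hA : ∀ T : Set V, (G.edgeSet ∩ crossSet T).ncard ≤ (G.edgeSet ∩ crossSet A).ncard)
    (S : Set V) :
    (G.edgeSet ∩ crossSet S).ncard
      ≤ 2 * ((G.edgeSet ∩ crossSet A) ∩ (G.edgeSet ∩ crossSet S)).ncard := by
  classical
  set X := G.edgeSet ∩ crossSet A with hX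
  set C := G.edgeSet ∩ crossSet S with hC
  have hsymm : G.edgeSet ∩ crossSet (symmDiff A S) = (X \ C) ∪ (C \ X) := by
    ext e
    induction e using Sym2.ind with
    | _ a b =>
      simp only [hX, hC, Set.mem_inter_iff, Set.mem_union, Set.mem_diff,
        Set.mem_inter_iff, mem_crossSet, Set.mem_symmDiff, Xor']
      constructor
      · rintro ⟨he, hx⟩
        by_cases ha : a ∈ A <;> by_cases hb : b ∈ A <;>
          by_cases has : a ∈ S <;> by_cases hbs : b ∈ S <;> simp_all <;> tauto
      · rintro (⟨⟨he, hx⟩, hnc⟩ | ⟨⟨he, hx⟩, hnc⟩) <;> refine ⟨he, ?_⟩ <;>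
          by_cases ha : a ∈ A <;> by_cases hb : b ∈ A <;>
          by_cases has : a ∈ S <;> by_cases hbs : b ∈ S <;> simp_all <;> tauto
  have hdsj : Disjoint (X \ C) (C \ X) :=
    Set.disjoint_of_subset_left Set.diff_subset disjoint_sdiff_self_right
  have h1 : (X \ C).ncard + (C \ X).ncard ≤ X.ncard := by
    have := hA (symmDiff A S)
    rwa [hsymm, Set.ncard_union_eq hdsj (Set.toFinite _) (Set.toFinite _)] at this
  have h2 : (X \ C).ncard + (X ∩ C).ncard = X.ncard := by
    rw [← Set.ncard_union_eq
      (Set.disjoint_of_subset_right Set.inter_subset_right disjoint_sdiff_self_left)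
      (Set.toFinite _) (Set.toFinite _), Set.diff_union_inter]
  have h3 : (C \ X).ncard ≤ (X ∩ C).ncard := by omega
  have h4 : (C \ X).ncard + (X ∩ C).ncard = C.ncard := by
    rw [← Set.ncard_union_eq
      (Set.disjoint_of_subset_right Set.inter_subset_left disjoint_sdiff_self_left)
      (Set.toFinite _) (Set.toFinite _), Set.inter_comm, Set.diff_union_inter]
  omega

end Aux

/-- Every graph G has a 2-partition (A, Aᶜ) such that the
spanning bipartite subgraph induced by the partition has edge-connectivity at
least ⌊λ(G)/2⌋. -/
theorem stmt_16 {V : Type*} [Fintype V] (G : SimpleGraph V) :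
    ∃ A : Set V,
      edgeConn G / 2 ≤ edgeConn
        { Adj := fun u v => G.Adj u v ∧ ¬ (u ∈ A ↔ v ∈ A),
          symm := ⟨fun u v h => ⟨h.1.symm, fun hiff => h.2 hiff.symm⟩⟩,
          loopless := ⟨fun v h => h.2 Iff.rfl⟩ } := by
  classical
  obtain ⟨A, hA⟩ := Finite.exists_max (fun T : Set V => (G.edgeSet ∩ crossSet T).ncard)
  refine ⟨A, ?_⟩
  set B : SimpleGraph V :=
    { Adj := fun u v => G.Adj u v ∧ ¬ (u ∈ A ↔ v ∈ A),
      symm := ⟨fun u v h => ⟨h.1.symm, fun hiff => h.2 hiff.symm⟩⟩,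
      loopless := ⟨fun v h => h.2 Iff.rfl⟩ } with hB
  have hBedge : B.edgeSet = G.edgeSet ∩ crossSet A := by
    ext e
    induction e using Sym2.ind with
    | _ a b =>
      simp only [SimpleGraph.mem_edgeSet, hB, Set.mem_inter_iff, mem_crossSet, Xor', Xor]
      tauto
  -- the set defining edgeConn B
  set T := {n : ℕ | ∃ F : Set (Sym2 V), F.ncard = n ∧ ¬ (B.deleteEdges F).Connected} with hT
  rcases Set.eq_empty_or_nonempty T with hTe | hTne
  · -- then every deletion of B stays connected; forces |V| ≤ 1, so edgeConn G = 0
    have hsub : Subsingleton V := by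
      by_contra hns
      rw [not_subsingleton_iff_nontrivial] at hns
      obtain ⟨u, v, huv⟩ := hns
      have hmem : (Set.univ : Set (Sym2 V)).ncard ∈ T := by
        refine ⟨Set.univ, rfl, ?_⟩
        intro h
        obtain ⟨p⟩ := h.preconnected u v
        cases p with
        | nil => exact huv rfl
        | cons hadj _ =>
          rw [SimpleGraph.deleteEdges_adj] at hadj
          exact hadj.2 (Set.mem_univ _)
      rw [hTe] at hmem
      exact hmem
    have hG0 : edgeConn G = 0 := by
      rcases isEmpty_or_nonempty V with hV | hV
      · refine Nat.sInf_eq_zero.mpr (Or.inl ⟨∅, by simp, ?_⟩)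
        intro h
        exact (not_nonempty_iff.mpr hV) h.nonempty
      · have : {n : ℕ | ∃ F : Set (Sym2 V), F.ncard = n ∧
            ¬ (G.deleteEdges F).Connected} = ∅ := by
          rw [Set.eq_empty_iff_forall_notMem]
          rintro n ⟨F, -, hcon⟩
          refine hcon ⟨fun a b => ?_⟩
          have : a = b := Subsingleton.elim a b
          exact this ▸ SimpleGraph.Reachable.refl a
        rw [edgeConn, this, Nat.sInf_empty]
    simp [hG0]
  · -- sInf bound: every element of T is at least edgeConn G / 2
    show edgeConn G / 2 ≤ sInf T
    refine le_csInf hTne ?_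
    rintro n ⟨F, rfl, hcon⟩
    -- V nonempty since B.deleteEdges F not connected could be from emptiness too
    rcases isEmpty_or_nonempty V with hV | hV
    · -- then edgeConn G = 0
      have hG0 : edgeConn G = 0 := by
        refine Nat.sInf_eq_zero.mpr (Or.inl ⟨∅, by simp, ?_⟩)
        intro h
        exact (not_nonempty_iff.mpr hV) h.nonempty
      simp [hG0]
    · have hpre : ¬ (B.deleteEdges F).Preconnected := by
        intro h; exact hcon ⟨h⟩
      rw [SimpleGraph.Preconnected] at hpre
      push_neg at hpre
      obtain ⟨u, v, huv⟩ := hpre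
      set S : Set V := {w | (B.deleteEdges F).Reachable u w} with hS
      have hu : u ∈ S := SimpleGraph.Reachable.refl u
      have hv : v ∉ S := huv
      -- B-edges crossing S are all in F
      have hsubF : (G.edgeSet ∩ crossSet A) ∩ (G.edgeSet ∩ crossSet S) ⊆ F := by
        rw [← hBedge]
        intro e he
        induction e using Sym2.ind with
        | _ a b =>
          by_contra hef
          obtain ⟨heB, -, heS⟩ := he
          rw [SimpleGraph.mem_edgeSet] at heB
          have hadj : (B.deleteEdges F).Adj a b :=
            SimpleGraph.deleteEdges_adj.mpr ⟨heB, hef⟩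
          rcases mem_crossSet.mp heS with ⟨ha, hb⟩ | ⟨hb, ha⟩
          · exact hb (ha.trans hadj.reachable)
          · exact ha ((hb : (B.deleteEdges F).Reachable u b).trans hadj.symm.reachable)
      -- edgeConn G ≤ ncard of the G-cut across S
      have hle : edgeConn G ≤ (G.edgeSet ∩ crossSet S).ncard :=
        Nat.sInf_le ⟨G.edgeSet ∩ crossSet S, rfl, cut_disconnects G hu hv⟩
      have hcount := max_cut_count G hA S
      have hFB : ((G.edgeSet ∩ crossSet A) ∩ (G.edgeSet ∩ crossSet S)).ncard ≤ F.ncard :=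
        Set.ncard_le_ncard hsubF (Set.toFinite _)
      omega
end

section
/- Let M be the digraph constructed from a 3-SAT instance F with variables v_1,…,v_n and clauses C_1,…,C_m as follows: vertices are {x_i, x̄_i, y_i, z_i : i ∈ [n]} ∪ {c_j : j ∈ [m]}; arcs are y_i→x_i, y_i→x̄_i, x_i→z_i, x̄_i→z_i for each i, plus x_i→c_j whenever x_i is a literal of C_j and x̄_i→c_j whenever x̄_i is a literal of C_j. Then M admits a 2-partition (V1,V2) with every vertex of V1 having an out-neighbour in V2 and every vertex of V2 having an in-neighbour in V1, if and only if F is satisfiable. -/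
/-- Vertices of the digraph M(F) built from a 3-SAT instance with n variables
and m clauses: `x i true` is the literal vertex x_i, `x i false` is x̄_i,
together with the vertices y_i, z_i and the clause vertices c_j. -/
inductive Vtx (n m : ℕ) where
  | x : Fin n → Bool → Vtx n m
  | y : Fin n → Vtx n m
  | z : Fin n → Vtx n m
  | c : Fin m → Vtx n m

/-- The arcs of M(F): y_i → x_i, y_i → x̄_i, x_i → z_i, x̄_i → z_i, and an arc
from each literal vertex to the clause vertices containing it. The clause C_j
has literals `lit j 0, lit j 1, lit j 2`, a literal being a pair
(variable, polarity). -/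
def Arcs (n m : ℕ) (lit : Fin m → Fin 3 → Fin n × Bool) :
    Vtx n m → Vtx n m → Prop :=
  fun a b =>
    match a, b with
    | .y i, .x i' _ => i = i'
    | .x i _, .z i' => i = i'
    | .x i s, .c j => ∃ k : Fin 3, lit j k = (i, s)
    | _, _ => False

/-- M(F) has a (δ⁺≥1, δ⁻≥1)-bipartite-partition iff F is
satisfiable. -/
theorem stmt_17 (n m : ℕ) (lit : Fin m → Fin 3 → Fin n × Bool) :
    (∃ A : Set (Vtx n m),
        (∀ v ∈ A, ∃ w, w ∉ A ∧ Arcs n m lit v w) ∧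
        (∀ v, v ∉ A → ∃ w ∈ A, Arcs n m lit w v)) ↔
      (∃ φ : Fin n → Bool, ∀ j : Fin m, ∃ k : Fin 3,
          φ (lit j k).1 = (lit j k).2) := by
  constructor
  · rintro ⟨A, h1, h2⟩
    -- sinks z and c are not in A
    have hz : ∀ i, Vtx.z (m := m) i ∉ A := by
      intro i hi
      obtain ⟨w, _, ha⟩ := h1 _ hi
      cases w <;> exact ha
    have hc : ∀ j, Vtx.c (n := n) j ∉ A := by
      intro j hj
      obtain ⟨w, _, ha⟩ := h1 _ hj
      cases w <;> exact ha
    -- sources y are in A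
    have hy : ∀ i, Vtx.y (m := m) i ∈ A := by
      intro i
      by_contra hni
      obtain ⟨w, _, ha⟩ := h2 _ hni
      cases w <;> exact ha
    -- for each i there is s with x i s ∈ A
    have hex : ∀ i, ∃ s, Vtx.x (m := m) i s ∈ A := by
      intro i
      obtain ⟨w, hwA, ha⟩ := h2 _ (hz i)
      cases w with
      | x i' s => cases ha; exact ⟨s, hwA⟩
      | y _ => exact ha.elim
      | z _ => exact ha.elim
      | c _ => exact ha.elim
    -- not both x i true, x i false in A
    have hnb : ∀ i, ∃ s, Vtx.x (m := m) i s ∉ A := by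
      intro i
      obtain ⟨w, hw, ha⟩ := h1 _ (hy i)
      cases w with
      | x i' s => cases ha; exact ⟨s, hw⟩
      | y _ => exact ha.elim
      | z _ => exact ha.elim
      | c _ => exact ha.elim
    classical
    refine ⟨fun i => Classical.choose (hex i), ?_⟩
    intro j
    obtain ⟨w, hwA, ha⟩ := h2 _ (hc j)
    cases w with
    | x i s =>
        obtain ⟨k, hk⟩ := ha
        refine ⟨k, ?_⟩
        rw [hk]
        show Classical.choose (hex i) = s
        have hA : Vtx.x (m := m) i (Classical.choose (hex i)) ∈ A :=
          Classical.choose_spec (hex i)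
        obtain ⟨s₀, hs₀⟩ := hnb i
        have h1' : Classical.choose (hex i) ≠ s₀ := fun h => hs₀ (h ▸ hA)
        have h2' : s ≠ s₀ := fun h => hs₀ (h ▸ hwA)
        rcases Bool.eq_false_or_eq_true (Classical.choose (hex i)) with hch | hch <;>
          rw [hch] at h1' ⊢ <;> cases s <;> cases s₀ <;> simp_all
    | y _ => exact ha.elim
    | z _ => exact ha.elim
    | c _ => exact ha.elim
  · rintro ⟨φ, hφ⟩
    refine ⟨{v | match v with
      | .y _ => True
      | .x i s => s = φ i
      | _ => False}, ?_, ?_⟩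
    · rintro (⟨i, s⟩ | i | i | j) hv
      · exact ⟨.z i, fun h => h, rfl⟩
      · exact ⟨.x i (!(φ i)), by simp [Set.mem_setOf_eq], rfl⟩
      · exact hv.elim
      · exact hv.elim
    · rintro (⟨i, s⟩ | i | i | j) hv
      · exact ⟨.y i, trivial, rfl⟩
      · exact (hv trivial).elim
      · exact ⟨.x i (φ i), rfl, rfl⟩
      · obtain ⟨k, hk⟩ := hφ j
        refine ⟨.x (lit j k).1 (lit j k).2, hk.symm, ⟨k, ?_⟩⟩
        simp
end

section
/- If B is a finite out-branching (spanning out-tree) rooted at r with at least two vertices, then either B has a spanning out-galaxy (a spanning vertex-disjoint collection of non-trivial out-stars), or B − r has a spanning out-galaxy. -/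
/-- A spanning out-galaxy of a digraph `D`: a spanning vertex-disjoint
collection of non-trivial out-stars whose arcs are arcs of `D`; each vertex is
assigned the root `ρ v` of its star. -/
def HasSpanningOutGalaxy {V : Type*} (D : V → V → Prop) : Prop :=
  ∃ ρ : V → V,
    (∀ v, ρ (ρ v) = ρ v) ∧
    (∀ v, ρ v ≠ v → D (ρ v) v) ∧
    (∀ v, ρ v = v → ∃ w, w ≠ v ∧ ρ w = v)

/-- Chains of a fixed length in a relation. -/
def RelChain {V : Type*} (B : V → V → Prop) : ℕ → V → V → Prop
  | 0 => Eq
  | n+1 => fun a b => ∃ c, RelChain B n a c ∧ B c b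

theorem reflTransGen_chain {V : Type*} {B : V → V → Prop} {a b : V}
    (h : Relation.ReflTransGen B a b) : ∃ n, RelChain B n a b := by
  induction h with
  | refl => exact ⟨0, rfl⟩
  | tail h₁ h₂ ih =>
    obtain ⟨n, hn⟩ := ih
    exact ⟨n + 1, _, hn, h₂⟩

theorem exists_covered {V : Type*} {S B : V → V → Prop} (hwf : WellFounded S)
    (hsub : ∀ v c, B v c → S c v) :
    ∃ covered : V → Prop, ∀ v, covered v ↔ ∃ c, B v c ∧ ¬ covered c := by
  refine ⟨hwf.fix (fun v IH => ∃ c, ∃ h : B v c, ¬ IH c (hsub v c h)), fun v => ?_⟩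
  rw [WellFounded.fix_eq]
  constructor
  · rintro ⟨c, h, hc⟩; exact ⟨c, h, hc⟩
  · rintro ⟨c, h, hc⟩; exact ⟨c, h, hc⟩

/-- A finite out-branching B rooted at r with at least two
vertices has a spanning out-galaxy, or B − r has one. -/
theorem stmt_18 {V : Type*} [Fintype V] (B : V → V → Prop) (r : V)
    (hcard : 2 ≤ Fintype.card V)
    (hroot : ∀ v : V, ¬ B v r)
    (hparent : ∀ v : V, v ≠ r → ∃! u : V, B u v)
    (hreach : ∀ v : V, Relation.ReflTransGen B r v) :
    HasSpanningOutGalaxy B ∨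
      HasSpanningOutGalaxy (fun a b : {v : V // v ≠ r} => B a b) := by
  classical
  -- rank of a vertex: minimal chain length from r
  have hch : ∀ v, ∃ n, RelChain B n r v := fun v => reflTransGen_chain (hreach v)
  set rank : V → ℕ := fun v => Nat.find (hch v) with hrank_def
  -- parent function
  set P : V → V := fun v => if h : v ≠ r then (hparent v h).choose else v with hP_def
  have hPspec : ∀ v (h : v ≠ r), B (P v) v ∧ ∀ u, B u v → u = P v := by
    intro v h
    have h1 := (hparent v h).choose_spec
    simp only [hP_def, dif_pos h]
    exact ⟨h1.1, fun u hu => h1.2 u hu⟩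
  -- rank increases along edges
  have hrank : ∀ u v, B u v → rank u < rank v := by
    intro u v huv
    have hv : v ≠ r := by rintro rfl; exact hroot u huv
    have hspec := Nat.find_spec (hch v)
    rcases hn : Nat.find (hch v) with _ | m
    · rw [hn] at hspec; exact absurd hspec.symm hv
    · rw [hn] at hspec
      obtain ⟨c, hc, hcv⟩ := hspec
      have hcu : c = u := by
        have h1 := (hPspec v hv).2 c hcv
        have h2 := (hPspec v hv).2 u huv
        rw [h1, h2]
      have h3 : rank u ≤ m := hcu ▸ Nat.find_le hc
      have h4 : rank v = m + 1 := hn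
      omega
  -- acyclicity
  have hacyc : ∀ v, ¬ Relation.TransGen B v v := by
    intro v hv
    have key : ∀ a b, Relation.TransGen B a b → rank a < rank b := by
      intro a b h
      induction h with
      | single h => exact hrank _ _ h
      | tail h₁ h₂ ih => exact lt_trans ih (hrank _ _ h₂)
    exact lt_irrefl _ (key v v hv)
  -- well-foundedness of the child relation
  have hwf : WellFounded (fun c v => B v c) := by
    have htg : WellFounded (Relation.TransGen (fun c v : V => B v c)) := by
      haveI : IsTrans V (Relation.TransGen (fun c v : V => B v c)) :=
        ⟨fun _ _ _ h₁ h₂ => h₁.trans h₂⟩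
      haveI : IsIrrefl V (Relation.TransGen (fun c v : V => B v c)) := by
        constructor
        intro a ha
        apply hacyc a
        exact (Relation.transGen_swap).mp ha
      exact Finite.wellFounded_of_trans_of_irrefl _
    exact Subrelation.wf (r := Relation.TransGen fun c v : V => B v c)
      (fun h => Relation.TransGen.single h) htg
  -- the covered predicate
  obtain ⟨covered, hcov⟩ := exists_covered hwf (fun v c h => h)
  have hnoloop : ∀ v, ¬ B v v := fun v h => hacyc v (Relation.TransGen.single h)
  by_cases hr : covered r
  · -- first disjunct
    left
    refine ⟨fun v => if covered v then v else P v, ?_, ?_, ?_⟩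
    · intro v
      by_cases h : covered v
      · simp [h]
      · simp only [if_neg h]
        have hv : v ≠ r := by rintro rfl; exact h hr
        have hPcov : covered (P v) := (hcov _).2 ⟨v, (hPspec v hv).1, h⟩
        simp [hPcov]
    · intro v hv
      by_cases h : covered v
      · simp [h] at hv
      · simp only [if_neg h] at *
        have hv' : v ≠ r := by rintro rfl; exact h hr
        exact (hPspec v hv').1
    · intro v hv
      by_cases h : covered v
      · obtain ⟨c, hc, hcc⟩ := (hcov v).1 h
        refine ⟨c, fun hcv => hnoloop v (hcv ▸ hc), ?_⟩
        simp only [if_neg hcc]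
        have hc' : c ≠ r := by rintro rfl; exact hroot v hc
        exact ((hPspec c hc').2 v hc).symm
      · simp only [if_neg h] at hv
        have hv' : v ≠ r := by rintro rfl; exact h hr
        have hb := (hPspec v hv').1
        rw [hv] at hb
        exact (hnoloop v hb).elim
  · -- second disjunct
    right
    have hchild : ∀ v, B r v → covered v := by
      intro v hv
      by_contra h
      exact hr ((hcov r).2 ⟨v, hv, h⟩)
    have hPne : ∀ (v : V), v ≠ r → ¬ covered v → P v ≠ r := by
      intro v hv hcv hPr
      have := (hPspec v hv).1
      rw [hPr] at this
      exact hcv (hchild v this)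
    refine ⟨fun v => if h : covered v.1 then v else ⟨P v.1, hPne v.1 v.2 h⟩, ?_, ?_, ?_⟩
    · rintro ⟨v, hv⟩
      by_cases h : covered v
      · simp [h]
      · simp only [dif_neg h]
        have hPcov : covered (P v) := (hcov _).2 ⟨v, (hPspec v hv).1, h⟩
        simp [hPcov]
    · rintro ⟨v, hv⟩ hne
      by_cases h : covered v
      · simp [h] at hne
      · simp only [dif_neg h]
        exact (hPspec v hv).1
    · rintro ⟨v, hv⟩ heq
      by_cases h : covered v
      · obtain ⟨c, hc, hcc⟩ := (hcov v).1 h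
        have hc' : c ≠ r := by rintro rfl; exact hroot v hc
        refine ⟨⟨c, hc'⟩, ?_, ?_⟩
        · intro hcv
          apply hnoloop v
          have : c = v := congrArg Subtype.val hcv
          exact this ▸ hc
        · simp only [dif_neg hcc]
          congr 1
          exact ((hPspec c hc').2 v hc).symm
      · simp only [dif_neg h] at heq
        have : P v = v := congrArg Subtype.val heq
        have hb := (hPspec v hv).1
        rw [this] at hb
        exact (hnoloop v hb).elim
end

section
/- If an out-branching B rooted at r has an arc from r to a leaf of B, then B has a spanning out-galaxy, and consequently a 2-partition (V1,V2) in which every vertex of V1 has an out-neighbour in V2 and every vertex of V2 has an in-neighbour in V1. -/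
/-- Auxiliary: "star root" predicate defined by well-founded recursion on the
flipped relation: `v` is a root iff it has a non-root child. -/
noncomputable def starRoot {V : Type*} (B : V → V → Prop)
    (hwf : WellFounded (fun a b => B b a)) : V → Prop :=
  hwf.fix (fun v IH => ∃ c, ∃ h : B v c, ¬ IH c h)

lemma starRoot_iff {V : Type*} (B : V → V → Prop)
    (hwf : WellFounded (fun a b => B b a)) (v : V) :
    starRoot B hwf v ↔ ∃ c, B v c ∧ ¬ starRoot B hwf c := by
  unfold starRoot
  rw [WellFounded.fix_eq]
  constructor
  · rintro ⟨c, h, hc⟩; exact ⟨c, h, hc⟩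
  · rintro ⟨c, h, hc⟩; exact ⟨c, h, hc⟩

/-- If an out-branching B rooted at r has an arc from r to a leaf,
then B has a spanning out-galaxy, and consequently a (δ⁺≥1, δ⁻≥1)-bipartite-
partition. -/
theorem stmt_19 {V : Type*} [Fintype V] (B : V → V → Prop) (r : V)
    (hroot : ∀ v : V, ¬ B v r)
    (hparent : ∀ v : V, v ≠ r → ∃! u : V, B u v)
    (hreach : ∀ v : V, Relation.ReflTransGen B r v)
    (l : V) (hleaf : ∀ w : V, ¬ B l w) (hrl : B r l) :
    HasSpanningOutGalaxy B ∧
      ∃ A : Set V,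
        (∀ v ∈ A, ∃ w, w ∉ A ∧ B v w) ∧
        (∀ v, v ∉ A → ∃ w ∈ A, B w v) := by
  classical
  -- acyclicity
  have hirr : ∀ v : V, ¬ Relation.TransGen B v v := by
    intro v
    have : ∀ v : V, Relation.ReflTransGen B r v → ¬ Relation.TransGen B v v := by
      intro v h
      induction h with
      | refl =>
        intro hc
        obtain ⟨u, _, hur⟩ := Relation.TransGen.tail'_iff.mp hc
        exact hroot u hur
      | tail hru huv IH =>
        rename_i u v
        intro hc
        have hvr : v ≠ r := by
          rintro rfl
          obtain ⟨w, _, hwr⟩ := Relation.TransGen.tail'_iff.mp hc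
          exact hroot w hwr
        obtain ⟨w, hvw, hwv⟩ := Relation.TransGen.tail'_iff.mp hc
        have hwu : w = u := (hparent v hvr).unique hwv huv
        subst hwu
        exact IH (Relation.TransGen.head' huv hvw)
    exact this v (hreach v)
  -- well-foundedness of the flipped relation
  have hwfT : WellFounded (fun a b : V => Relation.TransGen B b a) := by
    haveI : IsTrans V (fun a b : V => Relation.TransGen B b a) :=
      ⟨fun a b c h1 h2 => h2.trans h1⟩
    haveI : IsIrrefl V (fun a b : V => Relation.TransGen B b a) :=
      ⟨fun a h => hirr a h⟩
    exact Finite.wellFounded_of_trans_of_irrefl _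
  have hwf : WellFounded (fun a b : V => B b a) :=
    Subrelation.wf (fun h => Relation.TransGen.single h) hwfT
  set R : V → Prop := starRoot B hwf with hR
  have hRiff : ∀ v, R v ↔ ∃ c, B v c ∧ ¬ R c := fun v => starRoot_iff B hwf v
  -- l is not a root; r is a root
  have hRl : ¬ R l := by
    rw [hRiff]
    rintro ⟨c, hc, -⟩
    exact hleaf c hc
  have hRr : R r := (hRiff r).mpr ⟨l, hrl, hRl⟩
  -- the assignment ρ
  have hner : ∀ v, ¬ R v → v ≠ r := by
    rintro v hv rfl; exact hv hRr
  let ρ : V → V := fun v =>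
    if h : R v then v else ((hparent v (hner v h)).exists).choose
  have hρ_root : ∀ v, R v → ρ v = v := by
    intro v h; simp only [ρ, dif_pos h]
  have hρ_nonroot : ∀ v (h : ¬ R v), B (ρ v) v := by
    intro v h
    simp only [ρ, dif_neg h]
    exact ((hparent v (hner v h)).exists).choose_spec
  -- B is irreflexive
  have hBirr : ∀ v, ¬ B v v := fun v h => hirr v (Relation.TransGen.single h)
  -- parent of a non-root is a root
  have hparent_root : ∀ v, ¬ R v → R (ρ v) := by
    intro v h
    exact (hRiff (ρ v)).mpr ⟨v, hρ_nonroot v h, h⟩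
  -- the three galaxy properties
  have prop1 : ∀ v, ρ (ρ v) = ρ v := by
    intro v
    by_cases h : R v
    · rw [hρ_root v h, hρ_root v h]
    · exact hρ_root _ (hparent_root v h)
  have prop2 : ∀ v, ρ v ≠ v → B (ρ v) v := by
    intro v hne
    by_cases h : R v
    · exact absurd (hρ_root v h) hne
    · exact hρ_nonroot v h
  have prop3 : ∀ v, ρ v = v → ∃ w, w ≠ v ∧ ρ w = v := by
    intro v hv
    have hRv : R v := by
      by_contra h
      have hb := hρ_nonroot v h
      rw [hv] at hb
      exact hBirr v hb
    obtain ⟨c, hvc, hRc⟩ := (hRiff v).mp hRv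
    have hcr : c ≠ r := fun h => hroot v (by rwa [h] at hvc)
    have hcv : c ≠ v := fun h => hBirr v (by rwa [h] at hvc)
    refine ⟨c, hcv, ?_⟩
    have : B (ρ c) c := hρ_nonroot c hRc
    exact (hparent c hcr).unique this hvc
  refine ⟨⟨ρ, prop1, prop2, prop3⟩, {v | ρ v = v}, ?_, ?_⟩
  · intro v hv
    obtain ⟨w, hwv, hρw⟩ := prop3 v hv
    refine ⟨w, ?_, ?_⟩
    · simp only [Set.mem_setOf_eq]
      rw [hρw]; exact fun h => hwv h.symm
    · have hne : ρ w ≠ w := by rw [hρw]; exact fun h => hwv h.symm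
      have hB := prop2 w hne
      rwa [hρw] at hB
  · intro v hv
    simp only [Set.mem_setOf_eq] at hv
    exact ⟨ρ v, prop1 v, prop2 v hv⟩
end
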